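/- arXiv:1502.02198 — 4 statements merged into one kernel-verified Lean document; each statement's English description precedes it below -/
import Mathlib

section
/- Let α be a type, f : α → ℂ a function, and A, B, C finite subsets of α that are mutually disjoint. Define the q-measure of a finite set S by μ(S) = |∑_{x ∈ S} f(x)|². Then μ(A ∪ B ∪ C) = μ(A ∪ B) + μ(A ∪ C) + μ(B ∪ C) − μ(A) − μ(B) − μ(C). -/
open Finset

/-- Grade-2 additivity of the q-measure `μ S = |∑_{x ∈ S} f x|²` for mutually disjoint
finite sets. -/
theorem stmt_3 {α : Type*} [DecidableEq α] (f : α → ℂ) (A B C : Finset α)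
    (hAB : Disjoint A B) (hAC : Disjoint A C) (hBC : Disjoint B C)
    (μ : Finset α → ℝ) (hμ : ∀ S : Finset α, μ S = ‖∑ x ∈ S, f x‖ ^ 2) :
    μ (A ∪ B ∪ C) = μ (A ∪ B) + μ (A ∪ C) + μ (B ∪ C) - μ A - μ B - μ C := by
  have hABC : Disjoint (A ∪ B) C := Finset.disjoint_union_left.mpr ⟨hAC, hBC⟩
  simp only [hμ, Complex.sq_norm, Finset.sum_union hAB, Finset.sum_union hAC,
    Finset.sum_union hBC, Finset.sum_union hABC, Complex.normSq_apply,
    Complex.add_re, Complex.add_im]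
  ring
end

section
/- Let N be a natural number and c : Fin N → Fin 4 → ℂ satisfy both ∑_{k} c(j, k) = 1 and ∑_{k} |c(j, k)|² = 1 for every j, and let U : Matrix (Fin N × Fin 4) (Fin N) ℂ be defined by U((j, k), j′) = c(j, k) if j′ = j and 0 otherwise. If ρ : Matrix (Fin N) (Fin N) ℂ is positive semidefinite with trace 1 and satisfies ∑_{j, j′} ρ(j, j′) = 1 (i.e. ⟨ρ 1_N, 1_N⟩ = 1 for the all-ones vector 1_N), then U * ρ * Uᴴ is positive semidefinite with trace 1 and satisfies ∑_{(j,k), (j′,k′)} (U * ρ * Uᴴ)((j,k), (j′,k′)) = 1. -/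
open Matrix ComplexOrder

/-- If `ρ` is a stochastic state then so is `U ρ Uᴴ`. -/
theorem stmt_7 (N : ℕ) (c : Fin N → Fin 4 → ℂ)
    (hc1 : ∀ j, ∑ k, c j k = 1)
    (hc2 : ∀ j, ∑ k, ‖c j k‖ ^ 2 = 1)
    (U : Matrix (Fin N × Fin 4) (Fin N) ℂ)
    (hU : ∀ (j : Fin N) (k : Fin 4) (j' : Fin N),
      U (j, k) j' = if j' = j then c j k else 0)
    (ρ : Matrix (Fin N) (Fin N) ℂ) (hρ : ρ.PosSemidef) (htr : ρ.trace = 1)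
    (hst : ∑ j, ∑ j', ρ j j' = 1) :
    (U * ρ * Uᴴ).PosSemidef ∧ (U * ρ * Uᴴ).trace = 1 ∧
      ∑ p : Fin N × Fin 4, ∑ q : Fin N × Fin 4, (U * ρ * Uᴴ) p q = 1 := by
  have hUU : Uᴴ * U = 1 := by
    ext j' j''
    simp only [Matrix.mul_apply, conjTranspose_apply, Fintype.sum_prod_type]
    rcases eq_or_ne j' j'' with h | h
    · subst h
      rw [Finset.sum_eq_single j']
      · simp only [hU, eq_self_iff_true, if_true, Matrix.one_apply_eq]
        have : ∀ k, star (c j' k) * c j' k = ((‖c j' k‖ ^ 2 : ℝ) : ℂ) := by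
          intro k
          rw [Complex.star_def, mul_comm, Complex.mul_conj, Complex.sq_norm]
        simp_rw [this, ← Complex.ofReal_sum, hc2 j']
        norm_num
      · intro b _ hb
        simp [hU, hb.symm]
      · simp
    · rw [Matrix.one_apply_ne h]
      apply Finset.sum_eq_zero
      intro j _
      rcases eq_or_ne j' j with h1 | h1
      · subst h1
        simp [hU, h.symm]
      · simp [hU, h1]
  have key : ∀ (j : Fin N) (k : Fin 4) (j' : Fin N) (k' : Fin 4),
      (U * ρ * Uᴴ) (j, k) (j', k') = c j k * ρ j j' * star (c j' k') := by
    intro j k j' k'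
    simp only [Matrix.mul_apply, conjTranspose_apply]
    have h1 : ∀ a, (∑ b, U (j, k) b * ρ b a) = c j k * ρ j a := by
      intro a
      rw [Finset.sum_eq_single j]
      · simp [hU]
      · intro b _ hb; simp [hU, hb]
      · simp
    simp_rw [h1]
    rw [Finset.sum_eq_single j']
    · simp [hU]
    · intro b _ hb; simp [hU, hb]
    · simp
  refine ⟨hρ.mul_mul_conjTranspose_same U, ?_, ?_⟩
  · rw [Matrix.trace_mul_cycle, hUU, Matrix.one_mul, htr]
  · simp only [Fintype.sum_prod_type]
    have : ∀ (j j' : Fin N), ∑ k : Fin 4, ∑ k' : Fin 4,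
        (U * ρ * Uᴴ) (j, k) (j', k') = ρ j j' := by
      intro j j'
      simp_rw [key]
      rw [← Finset.sum_mul_sum]
      have : ∑ k', star (c j' k') = 1 := by
        rw [← star_sum, hc1]; simp
      simp only [mul_assoc, ← Finset.mul_sum, this, mul_one]
      rw [← Finset.sum_mul, hc1, one_mul]
    calc ∑ j, ∑ k : Fin 4, ∑ j', ∑ k' : Fin 4, (U * ρ * Uᴴ) (j, k) (j', k')
        = ∑ j, ∑ j', ∑ k : Fin 4, ∑ k' : Fin 4, (U * ρ * Uᴴ) (j, k) (j', k') := by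
          congr 1; ext j; rw [Finset.sum_comm]
      _ = ∑ j, ∑ j', ρ j j' := by simp_rw [this]
      _ = 1 := hst
end

section
/- Let N be a natural number and c : Fin N → Fin 4 → ℂ satisfy both ∑_{k} c(j, k) = 1 and ∑_{k} |c(j, k)|² = 1 for every j, and let U : Matrix (Fin N × Fin 4) (Fin N) ℂ be defined by U((j, k), j′) = c(j, k) if j′ = j and 0 otherwise. If v : Fin N → ℂ satisfies ∑_j |v(j)|² = 1 and ∑_j v(j) = 1, then w = U.mulVec v satisfies ∑_{(j,k)} |w(j,k)|² = 1 and ∑_{(j,k)} w(j,k) = 1. -/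
open Matrix

/-- If `v` is a stochastic state vector then so is `U.mulVec v`. -/
theorem stmt_8 (N : ℕ) (c : Fin N → Fin 4 → ℂ)
    (hc1 : ∀ j, ∑ k, c j k = 1)
    (hc2 : ∀ j, ∑ k, ‖c j k‖ ^ 2 = 1)
    (U : Matrix (Fin N × Fin 4) (Fin N) ℂ)
    (hU : ∀ (j : Fin N) (k : Fin 4) (j' : Fin N),
      U (j, k) j' = if j' = j then c j k else 0)
    (v : Fin N → ℂ) (hv1 : ∑ j, ‖v j‖ ^ 2 = 1) (hv2 : ∑ j, v j = 1) :
    (∑ p : Fin N × Fin 4, ‖U.mulVec v p‖ ^ 2 = 1) ∧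
      (∑ p : Fin N × Fin 4, U.mulVec v p = 1) := by
  have hw : ∀ (j : Fin N) (k : Fin 4), U.mulVec v (j, k) = c j k * v j := by
    intro j k
    simp only [Matrix.mulVec, dotProduct, hU]
    rw [Finset.sum_eq_single j]
    · simp
    · intro b _ hb; simp [hb]
    · simp
  constructor
  · rw [Fintype.sum_prod_type]
    calc ∑ j, ∑ k, ‖U.mulVec v (j, k)‖ ^ 2
        = ∑ j, (∑ k, ‖c j k‖ ^ 2) * ‖v j‖ ^ 2 := by
          refine Finset.sum_congr rfl fun j _ => ?_
          rw [Finset.sum_mul]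
          refine Finset.sum_congr rfl fun k _ => ?_
          rw [hw, norm_mul, mul_pow]
      _ = 1 := by simp only [hc2, one_mul, hv1]
  · rw [Fintype.sum_prod_type]
    calc ∑ j, ∑ k, U.mulVec v (j, k)
        = ∑ j, (∑ k, c j k) * v j := by
          refine Finset.sum_congr rfl fun j _ => ?_
          rw [Finset.sum_mul]
          exact Finset.sum_congr rfl fun k _ => hw j k
      _ = 1 := by simp only [hc1, one_mul, hv2]
end

section
/- Let c : Fin 4 → ℂ with ∑_{k} |c(k)|² = 1 and c(0) ≠ 0, and let M : Matrix (Fin 4) (Fin 4) ℂ be given by M(0, k) = c(0) · conj(c(k)) for k ≠ 0, M(k, 0) = −conj(c(0)) · c(k) for k ≠ 0, and M(i, j) = 0 otherwise. Set λ₊ = i·|c(0)|·√(1 − |c(0)|²) and λ₋ = −λ₊, and define v₊ = ![λ₊, −conj(c(0))·c(1), −conj(c(0))·c(2), −conj(c(0))·c(3)] and v₋ = ![λ₋, −conj(c(0))·c(1), −conj(c(0))·c(2), −conj(c(0))·c(3)]. Then M.mulVec v₊ = λ₊ • v₊ and M.mulVec v₋ = λ₋ • v₋; i.e. λ± are eigenvalues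 of M with eigenvectors v±. -/
open Matrix Complex

/-- The nonzero eigenvalues `λ± = ±i|c⁰|√(1-|c⁰|²)` of the commutator `M = [Q⁰, P⁰]`
with their eigenvectors. -/
theorem stmt_17 (c : Fin 4 → ℂ) (hc : ∑ k, ‖c k‖ ^ 2 = 1) (hc0 : c 0 ≠ 0)
    (M : Matrix (Fin 4) (Fin 4) ℂ)
    (hM1 : ∀ k : Fin 4, k ≠ 0 → M 0 k = c 0 * (starRingEnd ℂ) (c k))
    (hM2 : ∀ k : Fin 4, k ≠ 0 → M k 0 = -((starRingEnd ℂ) (c 0) * c k))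
    (hM3 : ∀ i j : Fin 4, ¬(i = 0 ∧ j ≠ 0) → ¬(i ≠ 0 ∧ j = 0) → M i j = 0)
    (lamPlus lamMinus : ℂ)
    (hlp : lamPlus = Complex.I * (‖c 0‖ : ℂ) *
      (Real.sqrt (1 - ‖c 0‖ ^ 2) : ℂ))
    (hlm : lamMinus = -lamPlus)
    (vPlus vMinus : Fin 4 → ℂ)
    (hvp : vPlus = ![lamPlus, -((starRingEnd ℂ) (c 0) * c 1),
      -((starRingEnd ℂ) (c 0) * c 2), -((starRingEnd ℂ) (c 0) * c 3)])
    (hvm : vMinus = ![lamMinus, -((starRingEnd ℂ) (c 0) * c 1),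
      -((starRingEnd ℂ) (c 0) * c 2), -((starRingEnd ℂ) (c 0) * c 3)]) :
    M.mulVec vPlus = lamPlus • vPlus ∧ M.mulVec vMinus = lamMinus • vMinus := by
  have hmc : ∀ k : Fin 4, c k * (starRingEnd ℂ) (c k) = ((‖c k‖ : ℝ) : ℂ) ^ 2 := by
    intro k
    rw [Complex.mul_conj, ← Complex.sq_norm]
    push_cast
    ring
  have hsum : ‖c 0‖ ^ 2 + ‖c 1‖ ^ 2 + ‖c 2‖ ^ 2
      + ‖c 3‖ ^ 2 = 1 := by
    simpa [Fin.sum_univ_four] using hc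
  have hle : ‖c 0‖ ^ 2 ≤ 1 := by
    nlinarith [sq_nonneg (‖c 1‖), sq_nonneg (‖c 2‖),
      sq_nonneg (‖c 3‖)]
  have hsqrt : ((Real.sqrt (1 - ‖c 0‖ ^ 2) : ℝ) : ℂ)
      * ((Real.sqrt (1 - ‖c 0‖ ^ 2) : ℝ) : ℂ)
      = 1 - ((‖c 0‖ : ℂ)) ^ 2 := by
    rw [← Complex.ofReal_mul,
      Real.mul_self_sqrt (by linarith : (0:ℝ) ≤ 1 - ‖c 0‖ ^ 2)]
    push_cast
    ring
  have key : lamPlus * lamPlus = -(((‖c 0‖) : ℂ) ^ 2)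
      * (((‖c 1‖) : ℂ) ^ 2 + ((‖c 2‖) : ℂ) ^ 2
        + ((‖c 3‖) : ℂ) ^ 2) := by
    have h2 : ((‖c 1‖) : ℂ) ^ 2 + ((‖c 2‖) : ℂ) ^ 2
        + ((‖c 3‖) : ℂ) ^ 2 = 1 - ((‖c 0‖) : ℂ) ^ 2 := by
      have : ‖c 1‖ ^ 2 + ‖c 2‖ ^ 2 + ‖c 3‖ ^ 2
          = 1 - ‖c 0‖ ^ 2 := by linarith
      exact_mod_cast this
    rw [h2, hlp]
    linear_combination (((‖c 0‖) : ℂ) ^ 2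
        * (((Real.sqrt (1 - ‖c 0‖ ^ 2) : ℝ) : ℂ)
          * ((Real.sqrt (1 - ‖c 0‖ ^ 2) : ℝ) : ℂ))) * Complex.I_mul_I
      - (((‖c 0‖) : ℂ) ^ 2) * hsqrt
  have e00 : M 0 0 = 0 := hM3 0 0 (by simp) (by simp)
  have e01 : M 0 1 = c 0 * (starRingEnd ℂ) (c 1) := hM1 1 (by decide)
  have e02 : M 0 2 = c 0 * (starRingEnd ℂ) (c 2) := hM1 2 (by decide)
  have e03 : M 0 3 = c 0 * (starRingEnd ℂ) (c 3) := hM1 3 (by decide)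
  have e10 : M 1 0 = -((starRingEnd ℂ) (c 0) * c 1) := hM2 1 (by decide)
  have e20 : M 2 0 = -((starRingEnd ℂ) (c 0) * c 2) := hM2 2 (by decide)
  have e30 : M 3 0 = -((starRingEnd ℂ) (c 0) * c 3) := hM2 3 (by decide)
  have eij : ∀ i j : Fin 4, i ≠ 0 → j ≠ 0 → M i j = 0 := fun i j hi hj =>
    hM3 i j (fun h => hi h.1) (fun h => hj h.2)
  have main : ∀ lam : ℂ, lam * lam = lamPlus * lamPlus →
      M.mulVec ![lam, -((starRingEnd ℂ) (c 0) * c 1),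
        -((starRingEnd ℂ) (c 0) * c 2), -((starRingEnd ℂ) (c 0) * c 3)]
      = lam • ![lam, -((starRingEnd ℂ) (c 0) * c 1),
        -((starRingEnd ℂ) (c 0) * c 2), -((starRingEnd ℂ) (c 0) * c 3)] := by
    intro lam hlam
    funext i
    set v : Fin 4 → ℂ := ![lam, -((starRingEnd ℂ) (c 0) * c 1),
      -((starRingEnd ℂ) (c 0) * c 2), -((starRingEnd ℂ) (c 0) * c 3)] with hv
    have hv0 : v 0 = lam := rfl
    have hv1 : v 1 = -((starRingEnd ℂ) (c 0) * c 1) := rfl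
    have hv2 : v 2 = -((starRingEnd ℂ) (c 0) * c 2) := rfl
    have hv3 : v 3 = -((starRingEnd ℂ) (c 0) * c 3) := rfl
    fin_cases i
    · show M.mulVec v 0 = lam * v 0
      simp only [Matrix.mulVec, dotProduct, Fin.sum_univ_four,
        e00, e01, e02, e03, hv0, hv1, hv2, hv3]
      linear_combination -hlam - key
        + (-(c 1 * (starRingEnd ℂ) (c 1)) - c 2 * (starRingEnd ℂ) (c 2)
          - c 3 * (starRingEnd ℂ) (c 3)) * hmc 0
        - (((‖c 0‖) : ℂ) ^ 2) * (hmc 1 + hmc 2 + hmc 3)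
    · show M.mulVec v 1 = lam * v 1
      simp only [Matrix.mulVec, dotProduct, Fin.sum_univ_four, e10,
        eij 1 1 (by decide) (by decide), eij 1 2 (by decide) (by decide),
        eij 1 3 (by decide) (by decide), hv0, hv1, hv2, hv3]
      ring
    · show M.mulVec v 2 = lam * v 2
      simp only [Matrix.mulVec, dotProduct, Fin.sum_univ_four, e20,
        eij 2 1 (by decide) (by decide), eij 2 2 (by decide) (by decide),
        eij 2 3 (by decide) (by decide), hv0, hv1, hv2, hv3]
      ring
    · show M.mulVec v 3 = lam * v 3
      simp only [Matrix.mulVec, dotProduct, Fin.sum_univ_four, e30,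
        eij 3 1 (by decide) (by decide), eij 3 2 (by decide) (by decide),
        eij 3 3 (by decide) (by decide), hv0, hv1, hv2, hv3]
      ring
  constructor
  · rw [hvp]; exact main lamPlus rfl
  · rw [hvm]; exact main lamMinus (by rw [hlm]; ring)
end
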